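/- arXiv:1906.03296 — 3 statements merged into one kernel-verified Lean document; each statement's English description precedes it below -/
import Mathlib

section
/- Let f be a quadratic form over K = GF(q²) whose zero set in PG(2,q²) is an F_{q²}-conic 𝒪 which is secant to ℓ∞, with 𝒪 ∩ ℓ∞ = {P̄, Q̄}, P̄ ≠ Q̄. Then [𝒪] ∩ Σ∞ = [P] ∪ [Q], and in PG(4,q²) the set [𝒪]⋆ ∩ {z = 0} equals [P]⋆ ∪ [Q]⋆ ∪ PQ^q ∪ P^qQ, where P, Q are the points of the transversal g corresponding to P̄, Q̄, PQ^q is the line of PG(4,q²) through P and Q^q, and P^qQ is its conjugate. -/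
open scoped Classical
open Matrix

noncomputable section

namespace BaerConics

/-- Points of the projective space `PG(n-1, K)` as projectivization of `Fin n → K`. -/
abbrev PP (K : Type) [Field K] (n : ℕ) : Type := Projectivization K (Fin n → K)

variable {K : Type} [Field K] {m n : ℕ}

/-- The (at most one) projective point determined by a vector:  empty if `v = 0`,
and the singleton `{[v]}` otherwise. -/
def projPt (v : Fin n → K) : Set (PP K n) :=
  {p | ∃ h : v ≠ 0, p = Projectivization.mk K v h}

/-- The set of projective points lying in a linear subspace. -/
def ptsOf (W : Submodule K (Fin n → K)) : Set (PP K n) :=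
  {p | p.rep ∈ W}

/-- The projective line through two points (as the set of points of the span). -/
def lineTh (P Q : PP K n) : Set (PP K n) :=
  ptsOf (Submodule.span K {P.rep, Q.rep})

/-- `X` is a projective flat of projective dimension `d`. -/
def IsFlat (d : ℕ) (X : Set (PP K n)) : Prop :=
  ∃ W : Submodule K (Fin n → K), Module.finrank K W = d + 1 ∧ X = ptsOf W

/-- Image of a set of vectors under the projective map induced by a matrix. -/
def mimg (M : Matrix (Fin m) (Fin n) K) (X : Set (Fin n → K)) : Set (PP K m) :=
  {p | ∃ v ∈ X, p ∈ projPt (M.mulVec v)}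

/-- Coordinatewise application of a ring homomorphism to a vector. -/
def mapVec {L : Type} [Field L] (σ : K →+* L) (v : Fin n → K) : Fin n → L :=
  fun i => σ (v i)

lemma mulVec_inj (M : Matrix (Fin n) (Fin n) K) (hM : IsUnit M.det) :
    Function.Injective M.mulVec := by
  intro a b hab
  have h := congrArg (fun v => M⁻¹.mulVec v) hab
  simpa [Matrix.mulVec_mulVec, Matrix.nonsing_inv_mul M hM] using h

/-- The projective transformation induced by an invertible matrix. -/
def pmap (M : Matrix (Fin n) (Fin n) K) (hM : IsUnit M.det) (p : PP K n) : PP K n :=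
  Projectivization.mk K (M.mulVec p.rep) (by
    intro h
    apply p.rep_nonzero
    have h0 : M.mulVec p.rep = M.mulVec 0 := by simpa [Matrix.mulVec_zero] using h
    exact mulVec_inj M hM h0)

/-- The map induced on projective points by the coordinatewise `q`-power map. -/
def frobPt (q : ℕ) (p : PP K n) : PP K n :=
  Projectivization.mk K (fun i => p.rep i ^ q) (by
    obtain ⟨i, hi⟩ := Function.ne_iff.mp p.rep_nonzero
    intro h
    exact pow_ne_zero q (by simpa using hi) (by simpa using congrFun h i))

/-- The line at infinity `z = 0` of `PG(2, K)`. -/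
def linf (K : Type) [Field K] : Set (PP K 3) := {p | p.rep 2 = 0}

/-- Coordinatewise application of the algebra map to a vector. -/
def algVec (F : Type) {K : Type} [Field F] [Field K] [Algebra F K] {n : ℕ}
    (v : Fin n → F) : Fin n → K := fun i => algebraMap F K (v i)

/-- Vectors representing the points of the standard Baer subline of `ℓ∞`. -/
def sublineVecs (F K : Type) [Field F] [Field K] [Algebra F K] : Set (Fin 3 → K) :=
  {v | ∃ θ : F, v = ![algebraMap F K θ, 1, 0]} ∪ {![1, 0, 0]}

/-- Nonzero vectors representing the points of `ℓ∞`. -/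
def linfVecs (K : Type) [Field K] : Set (Fin 3 → K) := {v | v ≠ 0 ∧ v 2 = 0}

/-- Vectors with all coordinates in (the image of) `F`, representing the canonical
Baer subplane. -/
def subplaneVecs (F K : Type) [Field F] [Field K] [Algebra F K] : Set (Fin 3 → K) :=
  {v | ∃ w : Fin 3 → F, w ≠ 0 ∧ v = algVec F w}

/-- Vectors of the standard conic with parameters in `S`. -/
def conicVecs {K : Type} [Field K] (S : Set K) : Set (Fin 3 → K) :=
  {v | ∃ θ ∈ S, v = ![1, θ, θ ^ 2]} ∪ {![0, 0, 1]}

/-- `b` is a Baer subline of the line `ℓ` of `PG(2,q²)`. -/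
def IsBaerSublineOf (F : Type) {K : Type} [Field F] [Field K] [Algebra F K]
    (b ℓ : Set (PP K 3)) : Prop :=
  ∃ M : Matrix (Fin 3) (Fin 3) K, IsUnit M.det ∧
    ℓ = mimg M (linfVecs K) ∧ b = mimg M (sublineVecs F K)

/-- `B` is a Baer subplane of `PG(2,q²)`. -/
def IsBaerSubplane (F : Type) {K : Type} [Field F] [Field K] [Algebra F K]
    (B : Set (PP K 3)) : Prop :=
  ∃ M : Matrix (Fin 3) (Fin 3) K, IsUnit M.det ∧ B = mimg M (subplaneVecs F K)

/-- `C` is the image under `PGL(3,K)` of the standard conic with parameters in `S`. -/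
def IsConicOver {K : Type} [Field K] (S : Set K) (C : Set (PP K 3)) : Prop :=
  ∃ M : Matrix (Fin 3) (Fin 3) K, IsUnit M.det ∧ C = mimg M (conicVecs S)

/-- An `F_q`-conic of `PG(2,q²)`: a nondegenerate conic of a Baer subplane. -/
def IsFqConic (F : Type) {K : Type} [Field F] [Field K] [Algebra F K]
    (C : Set (PP K 3)) : Prop :=
  IsConicOver (Set.range (algebraMap F K)) C

/-- An `F_{q²}`-conic of `PG(2,q²)`: a nondegenerate conic. -/
def IsFq2Conic {K : Type} [Field K] (C : Set (PP K 3)) : Prop :=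
  IsConicOver (Set.univ : Set K) C

/-- `𝒦` is an `ℓ∞`-Baer pencil with vertex `P`. -/
def IsLinfBaerPencil (F : Type) {K : Type} [Field F] [Field K] [Algebra F K]
    (𝒦 : Set (PP K 3)) (P : PP K 3) : Prop :=
  P ∈ linf K ∧ ∃ ℓ b : Set (PP K 3), IsBaerSublineOf F b ℓ ∧ P ∉ ℓ ∧
    (∃! X, X ∈ b ∩ linf K) ∧ 𝒦 = ⋃ X ∈ b, lineTh P X

/-- `m` is a line of the Baer subplane `B`, with extension (full line) `ℓ`. -/
def IsLineOfExt {K : Type} [Field K] (q : ℕ) (B m ℓ : Set (PP K 3)) : Prop :=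
  IsFlat 1 ℓ ∧ m = B ∩ ℓ ∧ m.ncard = q + 1

/-- `m` is a line of the Baer subplane `B`. -/
def IsLineOf {K : Type} [Field K] (q : ℕ) (B m : Set (PP K 3)) : Prop :=
  ∃ ℓ, IsLineOfExt q B m ℓ

/-- `P` and `Q` are conjugate with respect to the Baer subline `b` of `ℓ∞`. -/
def ConjWrtSubline (F : Type) {K : Type} [Field F] [Field K] [Algebra F K]
    (q : ℕ) (b : Set (PP K 3)) (P Q : PP K 3) : Prop :=
  ∃ (M : Matrix (Fin 3) (Fin 3) K) (hM : IsUnit M.det),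
    mimg M (linfVecs K) = linf K ∧ b = mimg M (sublineVecs F K) ∧
    ∃ P₀ : PP K 3, P = pmap M hM P₀ ∧ Q = pmap M hM (frobPt q P₀)

/-- A representative vector for the point `(δ,1,0)` (resp. `(1,0,0)`) of `ℓ∞`. -/
def ptInfVec {K : Type} [Field K] : Option K → Fin 3 → K
  | some δ => ![δ, 1, 0]
  | none => ![1, 0, 0]

lemma ptInfVec_ne {K : Type} [Field K] (t : Option K) : ptInfVec t ≠ 0 := by
  cases t with
  | none => intro h; have h0 := congrFun h 0; simp [ptInfVec] at h0
  | some δ => intro h; have h0 := congrFun h 1; simp [ptInfVec] at h0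

/-- The point of `ℓ∞` with parameter `δ ∈ K ∪ {∞}`. -/
def ptInf {K : Type} [Field K] (t : Option K) : PP K 3 :=
  Projectivization.mk K (ptInfVec t) (ptInfVec_ne t)

/-- The hyperplane at infinity `z = 0` of `PG(4, F)`. -/
def sinf (F : Type) [Field F] : Set (PP F 5) := {p | p.rep 4 = 0}

/-- Affine coordinates of the Bruck-Bose image of an affine point of `PG(2,q²)`. -/
def bbVec {F K : Type} [Field F] [Field K] (c0 c1 : K → F) (p : PP K 3) : Fin 5 → F :=
  ![c0 (p.rep 0 / p.rep 2), c1 (p.rep 0 / p.rep 2),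
    c0 (p.rep 1 / p.rep 2), c1 (p.rep 1 / p.rep 2), 1]

/-- The Bruck-Bose map (meaningful on affine points of `PG(2,q²)`). -/
def bb {F K : Type} [Field F] [Field K] (c0 c1 : K → F) (p : PP K 3) : PP F 5 :=
  Projectivization.mk F (bbVec c0 c1 p) (by
    intro h
    have h4 := congrFun h 4
    simp [bbVec] at h4)

/-- First spanning vector of the spread line with parameter `δ ∈ K ∪ {∞}`. -/
def spreadV1 {F K : Type} [Field F] [Field K] (c0 c1 : K → F) : Option K → Fin 5 → F
  | some δ => ![c0 δ, c1 δ, 1, 0, 0]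
  | none => ![1, 0, 0, 0, 0]

/-- Second spanning vector of the spread line with parameter `δ ∈ K ∪ {∞}`. -/
def spreadV2 {F K : Type} [Field F] [Field K] (c0 c1 : K → F) (t0 t1 : F) :
    Option K → Fin 5 → F
  | some δ => ![t0 * c1 δ, c0 δ + t1 * c1 δ, 0, 1, 0]
  | none => ![0, 1, 0, 0, 0]

/-- The line of the regular spread `S` with parameter `δ ∈ K ∪ {∞}`. -/
def spreadLine {F K : Type} [Field F] [Field K] (c0 c1 : K → F) (t0 t1 : F)
    (t : Option K) : Set (PP F 5) :=
  ptsOf (Submodule.span F {spreadV1 c0 c1 t, spreadV2 c0 c1 t0 t1 t})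

/-- The extension `[T]⋆` of a spread line to `PG(4,q²)`. -/
def extSpreadLine (F : Type) {K : Type} [Field F] [Field K] [Algebra F K]
    (c0 c1 : K → F) (t0 t1 : F) (t : Option K) : Set (PP K 5) :=
  ptsOf (Submodule.span K
    {algVec F (spreadV1 c0 c1 t), algVec F (spreadV2 c0 c1 t0 t1 t)})

/-- The `K`-extension of an `F`-subspace. -/
def extSub (F : Type) {K : Type} [Field F] [Field K] [Algebra F K] {n : ℕ}
    (W : Submodule F (Fin n → F)) : Submodule K (Fin n → K) :=
  Submodule.span K (algVec F '' (W : Set (Fin n → F)))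

def A0v {K : Type} [Field K] (τ : K) (q : ℕ) : Fin 5 → K := ![τ ^ q, -1, 0, 0, 0]
def A1v {K : Type} [Field K] (τ : K) (q : ℕ) : Fin 5 → K := ![0, 0, τ ^ q, -1, 0]
def B0v {K : Type} [Field K] (τ : K) : Fin 5 → K := ![τ, -1, 0, 0, 0]
def B1v {K : Type} [Field K] (τ : K) : Fin 5 → K := ![0, 0, τ, -1, 0]

/-- The transversal line `g` of the regular spread, in `PG(4,q²)`. -/
def gline {K : Type} [Field K] (τ : K) (q : ℕ) : Set (PP K 5) :=
  ptsOf (Submodule.span K {A0v τ q, A1v τ q})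

/-- The conjugate transversal line `g^q` of the regular spread, in `PG(4,q²)`. -/
def gqline {K : Type} [Field K] (τ : K) : Set (PP K 5) :=
  ptsOf (Submodule.span K {B0v τ, B1v τ})

/-- Representative vector of the point `T = δA₀ + A₁` of `g`. -/
def gptVec {K : Type} [Field K] (τ : K) (q : ℕ) : Option K → Fin 5 → K
  | some δ => δ • A0v τ q + A1v τ q
  | none => A0v τ q

/-- Representative vector of the conjugate point `T^q = δ^q A₀^q + A₁^q` of `g^q`. -/
def gqptVec {K : Type} [Field K] (τ : K) (q : ℕ) : Option K → Fin 5 → K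
  | some δ => δ ^ q • B0v τ + B1v τ
  | none => B0v τ

lemma gptVec_ne {K : Type} [Field K] (τ : K) (q : ℕ) (t : Option K) :
    gptVec τ q t ≠ 0 := by
  cases t with
  | none =>
      intro h
      have := congrFun h 1
      simp [gptVec, A0v] at this
  | some δ =>
      intro h
      have := congrFun h 3
      simp [gptVec, A0v, A1v] at this

lemma gqptVec_ne {K : Type} [Field K] (τ : K) (q : ℕ) (t : Option K) :
    gqptVec τ q t ≠ 0 := by
  cases t with
  | none =>
      intro h
      have := congrFun h 1
      simp [gqptVec, B0v] at this
  | some δ =>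
      intro h
      have := congrFun h 3
      simp [gqptVec, B0v, B1v] at this

/-- The point of `g` corresponding to the point of `ℓ∞` with parameter `δ ∈ K ∪ {∞}`. -/
def gpt {K : Type} [Field K] (τ : K) (q : ℕ) (t : Option K) : PP K 5 :=
  Projectivization.mk K (gptVec τ q t) (gptVec_ne τ q t)

/-- The point of `g^q` conjugate to `gpt τ q t`. -/
def gqpt {K : Type} [Field K] (τ : K) (q : ℕ) (t : Option K) : PP K 5 :=
  Projectivization.mk K (gqptVec τ q t) (gqptVec_ne τ q t)

/-- Evaluation of the quadratic form with matrix `M` at `v`. -/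
def qeval {K : Type} [Field K] {n : ℕ} (M : Matrix (Fin n) (Fin n) K) (v : Fin n → K) : K :=
  v ⬝ᵥ M.mulVec v

/-- Vectors of the standard twisted cubic (inside the hyperplane `x₄ = 0`)
with parameters in `S`. -/
def tcVecs {K : Type} [Field K] (S : Set K) : Set (Fin 5 → K) :=
  {v | ∃ θ ∈ S, v = ![1, θ, θ ^ 2, θ ^ 3, 0]} ∪ {![0, 0, 0, 1, 0]}

/-- Vectors of the standard 4-dimensional normal rational curve with parameters in `S`. -/
def nrcVecs {K : Type} [Field K] (S : Set K) : Set (Fin 5 → K) :=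
  {v | ∃ θ ∈ S, v = ![1, θ, θ ^ 2, θ ^ 3, θ ^ 4]} ∪ {![0, 0, 0, 0, 1]}

/-- `R` is a regulus of `Σ∞` in `PG(4,q)`. -/
def IsRegulus {F : Type} [Field F] (q : ℕ) (R : Set (Set (PP F 5))) : Prop :=
  R.ncard = q + 1 ∧
  (∀ ℓ ∈ R, IsFlat 1 ℓ ∧ ℓ ⊆ sinf F) ∧
  (∀ ℓ ∈ R, ∀ ℓ' ∈ R, ℓ ≠ ℓ' → ℓ ∩ ℓ' = ∅) ∧
  (∀ mℓ : Set (PP F 5), IsFlat 1 mℓ → mℓ ⊆ sinf F →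
    (∃ ℓ₁ ∈ R, ∃ ℓ₂ ∈ R, ∃ ℓ₃ ∈ R, ℓ₁ ≠ ℓ₂ ∧ ℓ₁ ≠ ℓ₃ ∧ ℓ₂ ≠ ℓ₃ ∧
      (mℓ ∩ ℓ₁).Nonempty ∧ (mℓ ∩ ℓ₂).Nonempty ∧ (mℓ ∩ ℓ₃).Nonempty) →
    ∀ ℓ ∈ R, (mℓ ∩ ℓ).Nonempty)


/-- The Bruck-Bose substitution `(x₀,x₁,y₀,y₁,z) ↦ (x₀+x₁τ, y₀+y₁τ, z)`. -/
def bbSubst (F : Type) {K : Type} [Field F] [Field K] [Algebra F K] (τ : K)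
    (v : Fin 5 → F) : Fin 3 → K :=
  ![algebraMap F K (v 0) + algebraMap F K (v 1) * τ,
    algebraMap F K (v 2) + algebraMap F K (v 3) * τ,
    algebraMap F K (v 4)]


/-! ### Auxiliary lemmas for statement_9 -/

section Stmt9Aux

open Matrix

variable {F K : Type} [Field F] [Field K] [Algebra F K]

lemma st9_qeval_smul {n : ℕ} (N : Matrix (Fin n) (Fin n) K) (c : K) (v : Fin n → K) :
    qeval N (c • v) = c^2 * qeval N v := by
  simp [qeval, Matrix.mulVec_smul, smul_dotProduct, dotProduct_smul, smul_eq_mul]; ring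

lemma st9_exists_rep_mk {n : ℕ} (v : Fin n → K) (hv : v ≠ 0) :
    ∃ c : K, c ≠ 0 ∧ (Projectivization.mk K v hv).rep = c • v := by
  obtain ⟨a, ha⟩ := (Projectivization.mk_eq_mk_iff K _ _ _ hv).mp
    (Projectivization.mk_rep (Projectivization.mk K v hv))
  exact ⟨a, a.ne_zero, by rw [← ha]; simp [Units.smul_def]⟩

lemma st9_qeval_mk_zero_iff {n : ℕ} (N : Matrix (Fin n) (Fin n) K) (v : Fin n → K) (hv : v ≠ 0) :
    qeval N ((Projectivization.mk K v hv).rep) = 0 ↔ qeval N v = 0 := by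
  obtain ⟨c, hc, hrep⟩ := st9_exists_rep_mk v hv
  rw [hrep, st9_qeval_smul]
  simp [mul_eq_zero, pow_eq_zero_iff, hc]

lemma st9_rep_mk_coord_zero_iff {n : ℕ} (v : Fin n → K) (hv : v ≠ 0) (i : Fin n) :
    (Projectivization.mk K v hv).rep i = 0 ↔ v i = 0 := by
  obtain ⟨c, hc, hrep⟩ := st9_exists_rep_mk v hv
  rw [hrep]
  simp [Pi.smul_apply, smul_eq_mul, hc]

lemma st9_qeval_add {n : ℕ} (N : Matrix (Fin n) (Fin n) K) (u w : Fin n → K) :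
    qeval N (u + w) = qeval N u + qeval N w + u ⬝ᵥ N.mulVec w + w ⬝ᵥ N.mulVec u := by
  simp [qeval, Matrix.mulVec_add, dotProduct_add, add_dotProduct]; ring

lemma st9_qeval_single {n : ℕ} (N : Matrix (Fin n) (Fin n) K) (i : Fin n) :
    qeval N (Pi.single i 1) = N i i := by
  simp [qeval, Matrix.mulVec_single, dotProduct, Pi.single_apply]

lemma st9_single_dot_mulVec_single {n : ℕ} (N : Matrix (Fin n) (Fin n) K) (i j : Fin n) :
    (Pi.single i 1 : Fin n → K) ⬝ᵥ N.mulVec (Pi.single j 1) = N i j := by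
  simp [Matrix.mulVec_single, dotProduct, Pi.single_apply]

lemma st9_algVec_single {n : ℕ} (i : Fin n) :
    algVec F (Pi.single i (1:F)) = (Pi.single i 1 : Fin n → K) := by
  funext j
  by_cases h : j = i <;> simp [algVec, Pi.single_apply, h]

lemma st9_algVec_add {n : ℕ} (u w : Fin n → F) :
    algVec F (u + w) = (algVec F u : Fin n → K) + algVec F w := by
  funext j; simp [algVec]

lemma st9_qeval_ext {n : ℕ} (N : Matrix (Fin n) (Fin n) K)
    (h : ∀ w : Fin n → F, qeval N (algVec F w) = 0) :
    ∀ v : Fin n → K, qeval N v = 0 := by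
  have hdiag : ∀ i, N i i = 0 := by
    intro i
    have := h (Pi.single i 1)
    rwa [st9_algVec_single, st9_qeval_single] at this
  have hoff : ∀ i j, N i j + N j i = 0 := by
    intro i j
    by_cases hij : i = j
    · subst hij; rw [hdiag]; ring
    · have := h (Pi.single i 1 + Pi.single j 1)
      rw [st9_algVec_add, st9_algVec_single, st9_algVec_single, st9_qeval_add, st9_qeval_single,
        st9_qeval_single, st9_single_dot_mulVec_single, st9_single_dot_mulVec_single,
        hdiag, hdiag] at this
      linear_combination this
  intro v
  have expand : qeval N v = ∑ x ∈ Finset.univ ×ˢ Finset.univ,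
      (v x.1 * N x.1 x.2 * v x.2) := by
    rw [Finset.sum_product' Finset.univ Finset.univ (fun i j => v i * N i j * v j)]
    simp [qeval, dotProduct, Matrix.mulVec, Finset.mul_sum, mul_assoc]
  rw [expand]
  refine Finset.sum_involution (fun a _ => (a.2, a.1)) ?_ ?_
    (fun a ha => Finset.mem_product.mpr ⟨Finset.mem_univ _, Finset.mem_univ _⟩)
    (fun a ha => rfl)
  · intro a ha
    have := hoff a.1 a.2
    linear_combination (v a.1 * v a.2) * this
  · intro a ha hfa
    intro hcontra
    apply hfa
    have h1 : a.2 = a.1 := congrArg Prod.fst hcontra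
    rw [h1, hdiag]
    ring

lemma st9_exists_frob [Fintype F] [Fintype K] (q : ℕ) (hq : Fintype.card F = q) :
    ∃ φ : K →+* K, ∀ x : K, φ x = x ^ q := by
  haveI : CharP F (ringChar F) := ringChar.charP F
  obtain ⟨n, hp, hcard⟩ := FiniteField.card F (ringChar F)
  haveI : CharP K (ringChar F) :=
    charP_of_injective_algebraMap (algebraMap F K).injective (ringChar F)
  haveI : ExpChar K (ringChar F) := ExpChar.prime hp
  refine ⟨iterateFrobenius K (ringChar F) n, fun x => ?_⟩
  rw [iterateFrobenius_def, ← hcard, hq]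

lemma st9_fix_of_range [Fintype F] (q : ℕ) (hq : Fintype.card F = q) (a : F) :
    (algebraMap F K a) ^ q = algebraMap F K a := by
  rw [← map_pow, ← hq, FiniteField.pow_card]

open Polynomial in
lemma st9_range_of_fix [Fintype F] (q : ℕ) (hq : Fintype.card F = q) (x : K)
    (hx : x ^ q = x) : x ∈ Set.range (algebraMap F K) := by
  have hq2 : 2 ≤ q := hq ▸ Fintype.one_lt_card
  set P : K[X] := X ^ q - X with hP
  have hdeg : P.natDegree = q := by
    rw [hP, natDegree_sub_eq_left_of_natDegree_lt, natDegree_X_pow]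
    rw [natDegree_X, natDegree_X_pow]; omega
  have hPne : P ≠ 0 := by
    intro h; rw [h, natDegree_zero] at hdeg; omega
  have hroot : ∀ y : K, y ^ q = y → y ∈ P.roots.toFinset := by
    intro y hy
    rw [Multiset.mem_toFinset, mem_roots hPne]
    simp [hP, IsRoot, hy]
  have himg : Finset.univ.image (algebraMap F K) ⊆ P.roots.toFinset := by
    intro z hz
    obtain ⟨a, _, rfl⟩ := Finset.mem_image.mp hz
    exact hroot _ (st9_fix_of_range q hq a)
  have hcards : P.roots.toFinset.card ≤ q :=
    le_trans (Multiset.toFinset_card_le _) (le_of_le_of_eq (Polynomial.card_roots' P) hdeg)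
  have himgcard : (Finset.univ.image (algebraMap F K)).card = q := by
    rw [Finset.card_image_of_injective _ (algebraMap F K).injective, Finset.card_univ, hq]
  have heq : Finset.univ.image (algebraMap F K) = P.roots.toFinset :=
    Finset.eq_of_subset_of_card_le himg (himgcard ▸ hcards)
  have := hroot x hx
  rw [← heq] at this
  obtain ⟨a, _, ha⟩ := Finset.mem_image.mp this
  exact ⟨a, ha⟩

/-- linear form cutting out the point with parameter `t` on the line at infinity -/
def Lf {K : Type} [Field K] (t : Option K) (x y : K) : K := t.elim y (fun δ => x - δ * y)

/-- conjugated linear form -/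
def Lfq {K : Type} [Field K] (q : ℕ) (t : Option K) (x y : K) : K :=
  t.elim y (fun δ => x - δ^q * y)

lemma st9_mk_eq_ptInf_some {x y : K} (hv : ![x,y,0] ≠ 0) (δ : K) :
    Projectivization.mk K ![x,y,0] hv = ptInf (some δ) ↔ y ≠ 0 ∧ x = δ * y := by
  unfold ptInf
  rw [Projectivization.mk_eq_mk_iff]
  constructor
  · rintro ⟨a, ha⟩
    have h0 := congrFun ha 0
    have h1 := congrFun ha 1
    simp [ptInfVec, Units.smul_def] at h0 h1
    subst h1
    exact ⟨a.ne_zero, by rw [← h0]; ring⟩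
  · rintro ⟨hy, rfl⟩
    refine ⟨Units.mk0 y hy, ?_⟩
    funext i
    fin_cases i <;> simp [ptInfVec, Units.smul_def] <;> ring

lemma st9_mk_eq_ptInf_none {x y : K} (hv : ![x,y,0] ≠ 0) :
    Projectivization.mk K ![x,y,0] hv = ptInf none ↔ y = 0 := by
  unfold ptInf
  rw [Projectivization.mk_eq_mk_iff]
  constructor
  · rintro ⟨a, ha⟩
    have h1 := congrFun ha 1
    simpa [ptInfVec, Units.smul_def] using h1.symm
  · rintro rfl
    have hx : x ≠ 0 := by
      intro hx; apply hv; subst hx; funext i; fin_cases i <;> rfl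
    refine ⟨Units.mk0 x hx, ?_⟩
    funext i
    fin_cases i <;> simp [ptInfVec, Units.smul_def]

lemma st9_ptInf_none_ne_some (δ : K) : ptInf (none : Option K) ≠ ptInf (some δ) := by
  intro h
  have := (st9_mk_eq_ptInf_some (ptInfVec_ne none) δ).mp h
  simp at this

lemma st9_qeval3_poly (M : Matrix (Fin 3) (Fin 3) K) (x y : K) :
    qeval M ![x, y, 0] =
      (qeval M ![1,0,0]) * x^2
      + (qeval M ![1,1,0] - qeval M ![1,0,0] - qeval M ![0,1,0]) * x * y
      + (qeval M ![0,1,0]) * y^2 := by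
  simp [qeval, dotProduct, Matrix.mulVec, Fin.sum_univ_three]
  ring

lemma st9_conic_linf_split (M : Matrix (Fin 3) (Fin 3) K)
    (tP tQ : Option K) (hne : ptInf tP ≠ ptInf tQ)
    (hsec : {p : PP K 3 | qeval M p.rep = 0} ∩ linf K = {ptInf tP, ptInf tQ}) :
    ∀ x y : K, (qeval M ![x,y,0] = 0 ↔ Lf tP x y = 0 ∨ Lf tQ x y = 0) := by
  have hmem : ∀ t : Option K, t = tP ∨ t = tQ → qeval M (ptInfVec t) = 0 := by
    rintro t ht
    have hm : ptInf t ∈ ({ptInf tP, ptInf tQ} : Set (PP K 3)) := by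
      rcases ht with rfl | rfl
      · exact Set.mem_insert _ _
      · exact Set.mem_insert_of_mem _ rfl
    rw [← hsec] at hm
    have := hm.1
    rwa [Set.mem_setOf_eq, ptInf, st9_qeval_mk_zero_iff] at this
  have hthird : ∀ x y : K, ∀ hv : ![x,y,0] ≠ 0, qeval M ![x,y,0] = 0 →
      Projectivization.mk K ![x,y,0] hv = ptInf tP ∨
      Projectivization.mk K ![x,y,0] hv = ptInf tQ := by
    intro x y hv h0
    have hm : Projectivization.mk K ![x,y,0] hv ∈
        ({p : PP K 3 | qeval M p.rep = 0} ∩ linf K) := by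
      constructor
      · rw [Set.mem_setOf_eq, st9_qeval_mk_zero_iff]; exact h0
      · show _ = _
        rw [st9_rep_mk_coord_zero_iff]
        simp
    rw [hsec] at hm
    exact hm
  set a := qeval M ![(1:K),0,0] with ha_def
  set c2 := qeval M ![(0:K),1,0] with hc2_def
  set b := qeval M ![(1:K),1,0] - a - c2 with hb_def
  have hpoly : ∀ x y : K, qeval M ![x,y,0] = a*x^2 + b*x*y + c2*y^2 := by
    intro x y; rw [st9_qeval3_poly]
  intro x y
  match tP, tQ with
  | none, none => exact absurd rfl hne
  | some δ, some δ' =>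
      have hδδ' : δ ≠ δ' := by
        intro h
        exact hne (by rw [h])
      have h1 : a*δ^2 + b*δ + c2 = 0 := by
        have := hmem (some δ) (Or.inl rfl)
        rw [show ptInfVec (some δ) = ![δ,1,0] from rfl, hpoly] at this
        linear_combination this
      have h2 : a*δ'^2 + b*δ' + c2 = 0 := by
        have := hmem (some δ') (Or.inr rfl)
        rw [show ptInfVec (some δ') = ![δ',1,0] from rfl, hpoly] at this
        linear_combination this
      have ha : a ≠ 0 := by
        intro ha0
        have hb0 : b = 0 := by
          have hsub := sub_ne_zero.mpr hδδ'
          have : b * (δ - δ') = 0 := by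
            linear_combination h1 - h2 + (δ'^2 - δ^2) * ha0
          exact (mul_eq_zero.mp this).resolve_right hsub
        have hc0 : c2 = 0 := by linear_combination h1 - δ * hb0 - δ^2 * ha0
        have hz : qeval M ![(1:K),0,0] = 0 := by rw [hpoly]; rw [ha0, hb0, hc0]; ring
        have hv1 : ![(1:K),0,0] ≠ 0 := by
          intro h; have := congrFun h 0; simp at this
        rcases hthird 1 0 hv1 hz with h | h
        · exact st9_ptInf_none_ne_some δ h
        · exact st9_ptInf_none_ne_some δ' h
      have hb : b * (δ - δ') = -(a*(δ+δ')) * (δ - δ') := by linear_combination h1 - h2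
      have hbv : b = -(a*(δ+δ')) := mul_right_cancel₀ (sub_ne_zero.mpr hδδ') hb
      have hcv : c2 = a*δ*δ' := by linear_combination h1 - δ * hbv
      have hfact : qeval M ![x,y,0] = a * ((x - δ*y) * (x - δ'*y)) := by
        rw [hpoly, hbv, hcv]; ring
      rw [hfact]
      rw [mul_eq_zero, mul_eq_zero]
      simp only [Lf, Option.elim]
      constructor
      · rintro (h | h | h)
        · exact absurd h ha
        · exact Or.inl h
        · exact Or.inr h
      · rintro (h | h)
        · exact Or.inr (Or.inl h)
        · exact Or.inr (Or.inr h)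
  | some δ, none =>
      have h1 : a*δ^2 + b*δ + c2 = 0 := by
        have := hmem (some δ) (Or.inl rfl)
        rw [show ptInfVec (some δ) = ![δ,1,0] from rfl, hpoly] at this
        linear_combination this
      have ha0 : a = 0 := by
        have := hmem none (Or.inr rfl)
        rw [show ptInfVec (none : Option K) = ![(1:K),0,0] from rfl, hpoly] at this
        linear_combination this
      have hcv : c2 = -(b*δ) := by linear_combination h1 - δ^2 * ha0
      have hbne : b ≠ 0 := by
        intro hb0
        have hz : qeval M ![δ+1,(1:K),0] = 0 := by
          rw [hpoly, ha0, hb0]; rw [hcv, hb0]; ring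
        have hv1 : ![δ+1,(1:K),0] ≠ 0 := by
          intro h; have := congrFun h 1; simp at this
        rcases hthird (δ+1) 1 hv1 hz with h | h
        · have := (st9_mk_eq_ptInf_some hv1 δ).mp h
          simp at this
        · rw [st9_mk_eq_ptInf_none hv1] at h
          simp at h
      have hfact : qeval M ![x,y,0] = b * ((x - δ*y) * y) := by
        rw [hpoly, ha0, hcv]; ring
      rw [hfact, mul_eq_zero, mul_eq_zero]
      simp only [Lf, Option.elim]
      constructor
      · rintro (h | h | h)
        · exact absurd h hbne
        · exact Or.inl h
        · exact Or.inr h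
      · rintro (h | h)
        · exact Or.inr (Or.inl h)
        · exact Or.inr (Or.inr h)
  | none, some δ =>
      have h1 : a*δ^2 + b*δ + c2 = 0 := by
        have := hmem (some δ) (Or.inr rfl)
        rw [show ptInfVec (some δ) = ![δ,1,0] from rfl, hpoly] at this
        linear_combination this
      have ha0 : a = 0 := by
        have := hmem none (Or.inl rfl)
        rw [show ptInfVec (none : Option K) = ![(1:K),0,0] from rfl, hpoly] at this
        linear_combination this
      have hcv : c2 = -(b*δ) := by linear_combination h1 - δ^2 * ha0
      have hbne : b ≠ 0 := by
        intro hb0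
        have hz : qeval M ![δ+1,(1:K),0] = 0 := by
          rw [hpoly, ha0, hb0]; rw [hcv, hb0]; ring
        have hv1 : ![δ+1,(1:K),0] ≠ 0 := by
          intro h; have := congrFun h 1; simp at this
        rcases hthird (δ+1) 1 hv1 hz with h | h
        · rw [st9_mk_eq_ptInf_none hv1] at h
          simp at h
        · have := (st9_mk_eq_ptInf_some hv1 δ).mp h
          simp at this
      have hfact : qeval M ![x,y,0] = b * (y * (x - δ*y)) := by
        rw [hpoly, ha0, hcv]; ring
      rw [hfact, mul_eq_zero, mul_eq_zero]
      simp only [Lf, Option.elim]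
      constructor
      · rintro (h | h | h)
        · exact absurd h hbne
        · exact Or.inl h
        · exact Or.inr h
      · rintro (h | h)
        · exact Or.inr (Or.inl h)
        · exact Or.inr (Or.inr h)

lemma st9_indep (τ : K) (hτF : τ ∉ Set.range (algebraMap F K)) :
    ∀ a b : F, algebraMap F K a + algebraMap F K b * τ = 0 → a = 0 ∧ b = 0 := by
  intro a b h
  by_cases hb : b = 0
  · subst hb
    simp only [map_zero, zero_mul, add_zero] at h
    exact ⟨by simpa using h, rfl⟩
  · exfalso
    apply hτF
    refine ⟨-(a/b), ?_⟩
    have hbK : algebraMap F K b ≠ 0 := by simpa using hb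
    rw [map_neg, map_div₀, neg_eq_iff_eq_neg, div_eq_iff hbK]
    linear_combination h

lemma st9_spread_master (τ : K) (t0 t1 : F)
    (hτ : τ ^ 2 = algebraMap F K t1 * τ + algebraMap F K t0)
    (hτF : τ ∉ Set.range (algebraMap F K))
    (c0 c1 : K → F)
    (hc : ∀ x : K, x = algebraMap F K (c0 x) + algebraMap F K (c1 x) * τ)
    (t : Option K) (v : Fin 5 → F) :
    (v 4 = 0 ∧ Lf t (algebraMap F K (v 0) + algebraMap F K (v 1) * τ)
        (algebraMap F K (v 2) + algebraMap F K (v 3) * τ) = 0)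
    ↔ ∃ a b : F, a • spreadV1 c0 c1 t + b • spreadV2 c0 c1 t0 t1 t = v := by
  set α := algebraMap F K
  constructor
  · rintro ⟨h4, hL⟩
    cases t with
    | none =>
        simp only [Lf, Option.elim] at hL
        obtain ⟨h2, h3⟩ := st9_indep τ hτF _ _ hL
        refine ⟨v 0, v 1, ?_⟩
        funext i
        fin_cases i <;> simp [spreadV1, spreadV2, h2, h3, h4]
    | some δ =>
        simp only [Lf, Option.elim] at hL
        have key : α (v 0 - (c0 δ * v 2 + t0 * c1 δ * v 3))
            + α (v 1 - (c1 δ * v 2 + c0 δ * v 3 + t1 * c1 δ * v 3)) * τ = 0 := by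
          simp only [map_sub, _root_.map_add, _root_.map_mul]
          linear_combination hL + (α (v 2) + α (v 3) * τ) * (hc δ)
            + α (c1 δ) * α (v 3) * hτ
        obtain ⟨h0, h1⟩ := st9_indep τ hτF _ _ key
        refine ⟨v 2, v 3, ?_⟩
        funext i
        fin_cases i <;> simp [spreadV1, spreadV2, h4]
        · linear_combination -h0
        · linear_combination -h1
  · rintro ⟨a, b, rfl⟩
    cases t with
    | none =>
        refine ⟨by simp [spreadV1, spreadV2], ?_⟩
        simp [Lf, spreadV1, spreadV2]
    | some δ =>
        refine ⟨by simp [spreadV1, spreadV2], ?_⟩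
        simp only [Lf, Option.elim, Pi.add_apply, Pi.smul_apply, smul_eq_mul]
        simp [spreadV1, spreadV2, _root_.map_add, _root_.map_mul]
        linear_combination (-(α a) - α b * τ) * (hc δ) - α (c1 δ) * α b * hτ

lemma st9_ext_master (τ : K) (q : ℕ) (hneq : τ^q ≠ τ) (t t' : Option K) (v : Fin 5 → K) :
    (v 4 = 0 ∧ Lf t (v 0 + v 1 * τ) (v 2 + v 3 * τ) = 0 ∧
      Lfq q t' (v 0 + v 1 * τ^q) (v 2 + v 3 * τ^q) = 0)
    ↔ ∃ a b : K, a • gptVec τ q t + b • gqptVec τ q t' = v := by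
  have hD : τ^q - τ ≠ 0 := sub_ne_zero.mpr hneq
  obtain ⟨Dinv, hDinv⟩ : ∃ d : K, (τ^q - τ) * d = 1 := ⟨(τ^q - τ)⁻¹, mul_inv_cancel₀ hD⟩
  constructor
  · rintro ⟨h4, hL, hLq⟩
    refine ⟨(t.elim (v 0 + v 1 * τ) (fun _ => v 2 + v 3 * τ)) * Dinv,
            -(t'.elim (v 0 + v 1 * τ^q) (fun _ => v 2 + v 3 * τ^q)) * Dinv, ?_⟩
    cases t with
    | none =>
      simp only [Lf, Option.elim] at hL ⊢
      cases t' with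
      | none =>
        simp only [Lfq, Option.elim] at hLq ⊢
        funext i
        fin_cases i <;> simp [gptVec, gqptVec, A0v, A1v, B0v, B1v]
        · linear_combination (v 0) * hDinv
        · linear_combination (v 1) * hDinv
        · linear_combination v 2 * hDinv - Dinv * τ^q * hL + Dinv * τ * hLq
        · linear_combination v 3 * hDinv + Dinv * hL - Dinv * hLq
        · linear_combination -h4
      | some ε =>
        simp only [Lfq, Option.elim] at hLq ⊢
        funext i
        fin_cases i <;> simp [gptVec, gqptVec, A0v, A1v, B0v, B1v]
        · linear_combination v 0 * hDinv + Dinv * τ * hLq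
        · linear_combination v 1 * hDinv - Dinv * hLq
        · linear_combination v 2 * hDinv - Dinv * τ^q * hL
        · linear_combination Dinv * hL + v 3 * hDinv
        · linear_combination -h4
    | some δ =>
      simp only [Lf, Option.elim] at hL ⊢
      cases t' with
      | none =>
        simp only [Lfq, Option.elim] at hLq ⊢
        funext i
        fin_cases i <;> simp [gptVec, gqptVec, A0v, A1v, B0v, B1v]
        · linear_combination v 0 * hDinv - Dinv * τ^q * hL
        · linear_combination v 1 * hDinv + Dinv * hL
        · linear_combination v 2 * hDinv + Dinv * τ * hLq
        · linear_combination v 3 * hDinv - Dinv * hLq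
        · linear_combination -h4
      | some ε =>
        simp only [Lfq, Option.elim] at hLq ⊢
        funext i
        fin_cases i <;> simp [gptVec, gqptVec, A0v, A1v, B0v, B1v]
        · linear_combination v 0 * hDinv - Dinv * τ^q * hL + Dinv * τ * hLq
        · linear_combination v 1 * hDinv + Dinv * hL - Dinv * hLq
        · linear_combination v 2 * hDinv
        · linear_combination v 3 * hDinv
        · linear_combination -h4
  · rintro ⟨a, b, rfl⟩
    refine ⟨?_, ?_, ?_⟩
    · cases t <;> cases t' <;> simp [gptVec, gqptVec, A0v, A1v, B0v, B1v]
    · cases t <;> cases t' <;> (simp [Lf, gptVec, gqptVec, A0v, A1v, B0v, B1v]; try ring)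
    · cases t <;> cases t' <;> (simp [Lfq, gptVec, gqptVec, A0v, A1v, B0v, B1v]; try ring)

lemma st9_qeval_map {L : Type} [Field L] (σ : K →+* L) {n : ℕ}
    (N : Matrix (Fin n) (Fin n) K) (u : Fin n → K) :
    qeval (N.map σ) (fun i => σ (u i)) = σ (qeval N u) := by
  simp [qeval, dotProduct, Matrix.mulVec, Matrix.map_apply, map_sum, _root_.map_mul]

lemma st9_qeval_sub {n : ℕ} (A B : Matrix (Fin n) (Fin n) K) (v : Fin n → K) :
    qeval (A - B) v = qeval A v - qeval B v := by
  simp [qeval, Matrix.sub_mulVec, dotProduct_sub]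

lemma st9_qeval_add_mat {n : ℕ} (A B : Matrix (Fin n) (Fin n) K) (v : Fin n → K) :
    qeval (A + B) v = qeval A v + qeval B v := by
  simp [qeval, Matrix.add_mulVec, dotProduct_add]

lemma st9_qeval_smul_mat {n : ℕ} (c : K) (B : Matrix (Fin n) (Fin n) K) (v : Fin n → K) :
    qeval (c • B) v = c * qeval B v := by
  simp [qeval, Matrix.smul_mulVec, dotProduct_smul]

/-- the matrix of the substitution `(x₀,x₁,y₀,y₁,z) ↦ (x₀+x₁τ, y₀+y₁τ, z)` -/
def st9C (τ : K) : Matrix (Fin 3) (Fin 5) K :=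
  Matrix.of ![![1,τ,0,0,0],![0,0,1,τ,0],![0,0,0,0,1]]

lemma st9C_mulVec (τ : K) (v : Fin 5 → K) :
    (st9C τ).mulVec v = ![v 0 + v 1 * τ, v 2 + v 3 * τ, v 4] := by
  funext i
  fin_cases i <;> simp [st9C, Matrix.mulVec, dotProduct, Fin.sum_univ_five] <;> ring

lemma st9_qeval_conj (τ : K) (M : Matrix (Fin 3) (Fin 3) K) (v : Fin 5 → K) :
    qeval ((st9C τ)ᵀ * M * (st9C τ)) v = qeval M ![v 0 + v 1 * τ, v 2 + v 3 * τ, v 4] := by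
  rw [← st9C_mulVec τ v]
  rw [qeval, Matrix.mul_assoc, ← Matrix.mulVec_mulVec, ← Matrix.mulVec_mulVec,
    dotProduct_mulVec _ ((st9C τ)ᵀ), Matrix.vecMul_transpose]
  rfl

lemma st9_decompose_ext [Fintype F] [Fintype K]
    (τ : K) (M : Matrix (Fin 3) (Fin 3) K) (Minf M0 : Matrix (Fin 5) (Fin 5) F)
    (hdec : ∀ v : Fin 5 → F, qeval M (bbSubst F τ v) =
      algebraMap F K (qeval Minf v) + algebraMap F K (qeval M0 v) * τ) :
    ∀ v : Fin 5 → K, qeval M ![v 0 + v 1 * τ, v 2 + v 3 * τ, v 4] =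
      qeval (Minf.map (algebraMap F K)) v + qeval (M0.map (algebraMap F K)) v * τ := by
  set α := algebraMap F K
  set N : Matrix (Fin 5) (Fin 5) K :=
    (st9C τ)ᵀ * M * (st9C τ) - (Minf.map α + τ • (M0.map α)) with hN
  have hzero : ∀ w : Fin 5 → F, qeval N (algVec F w) = 0 := by
    intro w
    rw [hN, st9_qeval_sub, st9_qeval_add_mat, st9_qeval_smul_mat, st9_qeval_conj]
    have hbb : (![algVec F w 0 + algVec F w 1 * τ, algVec F w 2 + algVec F w 3 * τ,
        algVec F w 4] : Fin 3 → K) = bbSubst F τ w := by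
      funext i
      fin_cases i <;> simp [bbSubst, algVec]
    rw [hbb, hdec w]
    have h1 : qeval (Minf.map α) (algVec F w) = α (qeval Minf w) :=
      st9_qeval_map α Minf w
    have h2 : qeval (M0.map α) (algVec F w) = α (qeval M0 w) :=
      st9_qeval_map α M0 w
    rw [h1, h2]
    ring
  intro v
  have := st9_qeval_ext N hzero v
  rw [hN, st9_qeval_sub, st9_qeval_add_mat, st9_qeval_smul_mat, st9_qeval_conj] at this
  linear_combination this

lemma st9_mem_span_pair_smul {n : ℕ} {c d : K} (hc : c ≠ 0) (hd : d ≠ 0)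
    (u w : Fin n → K) :
    Submodule.span K {c • u, d • w} = Submodule.span K {u, w} := by
  apply le_antisymm
  · rw [Submodule.span_le]
    rintro x (rfl | rfl)
    · exact Submodule.smul_mem _ _ (Submodule.subset_span (Set.mem_insert _ _))
    · exact Submodule.smul_mem _ _ (Submodule.subset_span (Set.mem_insert_of_mem _ rfl))
  · have h1 : u ∈ Submodule.span K {c • u, d • w} := by
      have : (c⁻¹ : K) • (c • u) ∈ Submodule.span K {c • u, d • w} :=
        Submodule.smul_mem _ _ (Submodule.subset_span (Set.mem_insert _ _))
      rwa [smul_smul, inv_mul_cancel₀ hc, one_smul] at this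
    have h2 : w ∈ Submodule.span K {c • u, d • w} := by
      have : (d⁻¹ : K) • (d • w) ∈ Submodule.span K {c • u, d • w} :=
        Submodule.smul_mem _ _ (Submodule.subset_span (Set.mem_insert_of_mem _ rfl))
      rwa [smul_smul, inv_mul_cancel₀ hd, one_smul] at this
    rw [Submodule.span_le]
    rintro x (rfl | rfl)
    · exact h1
    · exact h2

lemma st9_span_pair_transform {n : ℕ} {c d : K} (h : c ≠ d) (u w : Fin n → K) :
    Submodule.span K {c • u - w, d • u - w} = Submodule.span K {u, w} := by
  have hcd : c - d ≠ 0 := sub_ne_zero.mpr h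
  apply le_antisymm
  · rw [Submodule.span_le]
    rintro x (rfl | rfl)
    · refine Submodule.mem_span_pair.mpr ⟨c, -1, ?_⟩
      simp [sub_eq_add_neg]
    · refine Submodule.mem_span_pair.mpr ⟨d, -1, ?_⟩
      simp [sub_eq_add_neg]
  · rw [Submodule.span_le]
    rintro x (rfl | rfl)
    · refine Submodule.mem_span_pair.mpr ⟨(c-d)⁻¹, -((c-d)⁻¹), ?_⟩
      funext i
      simp only [Pi.add_apply, Pi.smul_apply, Pi.sub_apply, smul_eq_mul, Pi.neg_apply]
      field_simp
      ring
    · refine Submodule.mem_span_pair.mpr ⟨d/(c-d), -(c/(c-d)), ?_⟩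
      funext i
      simp only [Pi.add_apply, Pi.smul_apply, Pi.sub_apply, smul_eq_mul, Pi.neg_apply]
      field_simp
      ring

lemma st9_gptVec_as_comb (τ : K) (q : ℕ) (t0 t1 : F) (c0 c1 : K → F)
    (hc : ∀ x : K, x = algebraMap F K (c0 x) + algebraMap F K (c1 x) * τ)
    (hδq : ∀ δ : K, δ^q = algebraMap F K (c0 δ) + algebraMap F K (c1 δ) * τ^q)
    (hsum : τ + τ^q = algebraMap F K t1) (hprod : τ * τ^q = -(algebraMap F K t0))
    (t : Option K) :
    gptVec τ q t = (τ^q) • algVec F (spreadV1 c0 c1 t)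
        - algVec F (spreadV2 c0 c1 t0 t1 t) ∧
    gqptVec τ q t = τ • algVec F (spreadV1 c0 c1 t)
        - algVec F (spreadV2 c0 c1 t0 t1 t) := by
  set α := algebraMap F K
  constructor
  · cases t with
    | none =>
        funext i
        fin_cases i <;> simp [gptVec, gqptVec, A0v, A1v, spreadV1, spreadV2, algVec]
    | some δ =>
        funext i
        fin_cases i <;> simp [gptVec, gqptVec, A0v, A1v, spreadV1, spreadV2, algVec]
        · linear_combination τ^q * (hc δ) + α (c1 δ) * hprod
        · linear_combination -(hc δ) - α (c1 δ) * hsum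
  · cases t with
    | none =>
        funext i
        fin_cases i <;> simp [gptVec, gqptVec, B0v, B1v, spreadV1, spreadV2, algVec]
    | some δ =>
        funext i
        fin_cases i <;> simp [gptVec, gqptVec, B0v, B1v, spreadV1, spreadV2, algVec]
        · linear_combination τ * (hδq δ) + α (c1 δ) * hprod
        · linear_combination -(hδq δ) - α (c1 δ) * hsum

end Stmt9Aux

/-- For a conic `𝒪` secant to `ℓ∞` at `P̄, Q̄`, the Bruck-Bose set `[𝒪]` meets `Σ∞`
exactly in the spread lines `[P], [Q]`; and over `GF(q²)`, `[𝒪]⋆` meets `z = 0` exactly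
in `[P]⋆ ∪ [Q]⋆ ∪ PQ^q ∪ P^qQ`. -/
theorem statement_9
    {F K : Type} [Field F] [Field K] [Fintype F] [Fintype K] [Algebra F K]
    (q : ℕ) (hq : Fintype.card F = q) (hK : Fintype.card K = q ^ 2)
    (τ : K) (t0 t1 : F)
    (hτ : τ ^ 2 = algebraMap F K t1 * τ + algebraMap F K t0)
    (hτF : τ ∉ Set.range (algebraMap F K))
    (c0 c1 : K → F)
    (hc : ∀ x : K, x = algebraMap F K (c0 x) + algebraMap F K (c1 x) * τ)
    (M : Matrix (Fin 3) (Fin 3) K)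
    (hO : IsFq2Conic {p : PP K 3 | qeval M p.rep = 0})
    (Minf M0 : Matrix (Fin 5) (Fin 5) F)
    (hdec : ∀ v : Fin 5 → F, qeval M (bbSubst F τ v) =
      algebraMap F K (qeval Minf v) + algebraMap F K (qeval M0 v) * τ)
    (tP tQ : Option K) (hne : ptInf tP ≠ ptInf tQ)
    (hsec : {p : PP K 3 | qeval M p.rep = 0} ∩ linf K = {ptInf tP, ptInf tQ}) :
    {p : PP F 5 | qeval Minf p.rep = 0 ∧ qeval M0 p.rep = 0} ∩ sinf F
      = spreadLine c0 c1 t0 t1 tP ∪ spreadLine c0 c1 t0 t1 tQ ∧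
    {p : PP K 5 | qeval (Minf.map (algebraMap F K)) p.rep = 0 ∧
        qeval (M0.map (algebraMap F K)) p.rep = 0} ∩ sinf K
      = extSpreadLine F c0 c1 t0 t1 tP ∪ extSpreadLine F c0 c1 t0 t1 tQ ∪
        lineTh (gpt τ q tP) (gqpt τ q tQ) ∪ lineTh (gqpt τ q tP) (gpt τ q tQ) := by
  classical
  obtain ⟨φ, hφ⟩ := st9_exists_frob (K := K) q hq
  have hfixα : ∀ a : F, (algebraMap F K a)^q = algebraMap F K a := st9_fix_of_range q hq
  have hneq : τ^q ≠ τ := fun h => hτF (st9_range_of_fix q hq τ h)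
  have hτq : (τ^q)^2 = algebraMap F K t1 * τ^q + algebraMap F K t0 := by
    have h2 := congrArg φ hτ
    rw [map_pow, _root_.map_add, _root_.map_mul] at h2
    simp only [hφ, hfixα] at h2
    exact h2
  have hsum : τ + τ^q = algebraMap F K t1 := by
    have hD : τ^q - τ ≠ 0 := sub_ne_zero.mpr hneq
    have h0 : (τ + τ^q - algebraMap F K t1) * (τ - τ^q) = 0 := by
      linear_combination hτ - hτq
    rcases mul_eq_zero.mp h0 with h | h
    · linear_combination h
    · exact absurd (by linear_combination -h) hD
  have hprod : τ * τ^q = -(algebraMap F K t0) := by linear_combination τ * hsum - hτ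
  have hδq : ∀ δ : K, δ^q = algebraMap F K (c0 δ) + algebraMap F K (c1 δ) * τ^q := by
    intro δ
    have h2 := congrArg φ (hc δ)
    rw [_root_.map_add, _root_.map_mul] at h2
    simp only [hφ, hfixα] at h2
    exact h2
  have hdecK := st9_decompose_ext τ M Minf M0 hdec
  have hsplit := st9_conic_linf_split M tP tQ hne hsec
  have hbij : Function.Bijective φ := Finite.injective_iff_bijective.mp φ.injective
  have hMφ : ∀ x y : K, qeval (M.map φ) ![x, y, 0] = 0 ↔
      (Lfq q tP x y = 0 ∨ Lfq q tQ x y = 0) := by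
    intro x y
    obtain ⟨x', hx'⟩ := hbij.2 x
    obtain ⟨y', hy'⟩ := hbij.2 y
    have hvec : (![x, y, 0] : Fin 3 → K) = fun i => φ (![x', y', 0] i) := by
      funext i; fin_cases i <;> simp [hx', hy']
    have htrans : ∀ t : Option K, (Lf t x' y' = 0 ↔ Lfq q t x y = 0) := by
      intro t
      cases t with
      | none =>
          simp only [Lf, Lfq, Option.elim]
          constructor
          · intro h; rw [← hy', h, map_zero]
          · intro h
            apply φ.injective
            rw [hy', h, map_zero]
      | some δ =>
          simp only [Lf, Lfq, Option.elim]
          constructor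
          · intro h
            have h2 := congrArg φ h
            rw [map_sub, _root_.map_mul, map_zero, hx', hy', hφ] at h2
            exact h2
          · intro h
            apply φ.injective
            rw [map_sub, _root_.map_mul, map_zero, hx', hy', hφ]
            exact h
    rw [hvec, st9_qeval_map, map_eq_zero, hsplit x' y', htrans tP, htrans tQ]
  -- conjugated decomposition
  have hMinf_fix : (Minf.map (algebraMap F K)).map φ = Minf.map (algebraMap F K) := by
    funext i j; simp [Matrix.map_apply, hφ, hfixα]
  have hM0_fix : (M0.map (algebraMap F K)).map φ = M0.map (algebraMap F K) := by
    funext i j; simp [Matrix.map_apply, hφ, hfixα]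
  have hconj : ∀ u : Fin 5 → K,
      qeval (M.map φ) ![u 0 + u 1 * τ^q, u 2 + u 3 * τ^q, u 4] =
        qeval (Minf.map (algebraMap F K)) u + qeval (M0.map (algebraMap F K)) u * τ^q := by
    intro u
    have hw : ∀ i, ∃ w, φ w = u i := fun i => hbij.2 (u i)
    choose w hwi using hw
    have h2 := congrArg φ (hdecK w)
    rw [_root_.map_add, _root_.map_mul] at h2
    have hv1 : (fun i => φ ((![w 0 + w 1 * τ, w 2 + w 3 * τ, w 4] : Fin 3 → K) i))
        = ![u 0 + u 1 * τ^q, u 2 + u 3 * τ^q, u 4] := by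
      funext i
      fin_cases i <;> simp [_root_.map_add, _root_.map_mul, hwi, hφ τ]
    have hv2 : (fun i => φ (w i)) = u := funext hwi
    have hl : φ (qeval M ![w 0 + w 1 * τ, w 2 + w 3 * τ, w 4])
        = qeval (M.map φ) ![u 0 + u 1 * τ^q, u 2 + u 3 * τ^q, u 4] := by
      rw [← st9_qeval_map φ M, hv1]
    have hr1 : φ (qeval (Minf.map (algebraMap F K)) w)
        = qeval (Minf.map (algebraMap F K)) u := by
      rw [← st9_qeval_map φ (Minf.map (algebraMap F K)), hMinf_fix, hv2]
    have hr2 : φ (qeval (M0.map (algebraMap F K)) w)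
        = qeval (M0.map (algebraMap F K)) u := by
      rw [← st9_qeval_map φ (M0.map (algebraMap F K)), hM0_fix, hv2]
    rw [hl, hr1, hr2, hφ τ] at h2
    exact h2
  -- span identifications
  have hspan : ∀ t : Option K,
      Submodule.span K {algVec F (spreadV1 c0 c1 t), algVec F (spreadV2 c0 c1 t0 t1 t)}
        = Submodule.span K {gptVec τ q t, gqptVec τ q t} := by
    intro t
    obtain ⟨h1, h2⟩ := st9_gptVec_as_comb τ q t0 t1 c0 c1 hc hδq hsum hprod t
    rw [h1, h2, st9_span_pair_transform hneq]
  have hline : ∀ t t' : Option K, lineTh (gpt τ q t) (gqpt τ q t')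
      = ptsOf (Submodule.span K {gptVec τ q t, gqptVec τ q t'}) := by
    intro t t'
    obtain ⟨c, hc0, hcrep⟩ := st9_exists_rep_mk (gptVec τ q t) (gptVec_ne τ q t)
    obtain ⟨d, hd0, hdrep⟩ := st9_exists_rep_mk (gqptVec τ q t') (gqptVec_ne τ q t')
    unfold lineTh gpt gqpt
    rw [hcrep, hdrep, st9_mem_span_pair_smul hc0 hd0]
  constructor
  · -- the PG(4,q) statement
    ext p
    simp only [Set.mem_inter_iff, Set.mem_setOf_eq, Set.mem_union]
    have h4iff : p ∈ sinf F ↔ p.rep 4 = 0 := Iff.rfl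
    rw [h4iff]
    have hbb : p.rep 4 = 0 → bbSubst F τ p.rep =
        ![algebraMap F K (p.rep 0) + algebraMap F K (p.rep 1) * τ,
          algebraMap F K (p.rep 2) + algebraMap F K (p.rep 3) * τ, 0] := by
      intro h4
      funext i
      fin_cases i <;> simp [bbSubst, h4]
    constructor
    · rintro ⟨⟨hA, hB⟩, h4⟩
      have h0 : qeval M ![algebraMap F K (p.rep 0) + algebraMap F K (p.rep 1) * τ,
          algebraMap F K (p.rep 2) + algebraMap F K (p.rep 3) * τ, 0] = 0 := by
        rw [← hbb h4, hdec, hA, hB]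
        simp
      rcases (hsplit _ _).mp h0 with h | h
      · exact Or.inl (Submodule.mem_span_pair.mpr
          ((st9_spread_master τ t0 t1 hτ hτF c0 c1 hc tP p.rep).mp ⟨h4, h⟩))
      · exact Or.inr (Submodule.mem_span_pair.mpr
          ((st9_spread_master τ t0 t1 hτ hτF c0 c1 hc tQ p.rep).mp ⟨h4, h⟩))
    · intro hmem
      have hex : (p.rep 4 = 0 ∧ Lf tP (algebraMap F K (p.rep 0) + algebraMap F K (p.rep 1) * τ)
            (algebraMap F K (p.rep 2) + algebraMap F K (p.rep 3) * τ) = 0) ∨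
          (p.rep 4 = 0 ∧ Lf tQ (algebraMap F K (p.rep 0) + algebraMap F K (p.rep 1) * τ)
            (algebraMap F K (p.rep 2) + algebraMap F K (p.rep 3) * τ) = 0) := by
        rcases hmem with hmem | hmem
        · exact Or.inl ((st9_spread_master τ t0 t1 hτ hτF c0 c1 hc tP p.rep).mpr
            (Submodule.mem_span_pair.mp hmem))
        · exact Or.inr ((st9_spread_master τ t0 t1 hτ hτF c0 c1 hc tQ p.rep).mpr
            (Submodule.mem_span_pair.mp hmem))
      have h4 : p.rep 4 = 0 := by rcases hex with ⟨h4, _⟩ | ⟨h4, _⟩ <;> exact h4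
      have hL : Lf tP (algebraMap F K (p.rep 0) + algebraMap F K (p.rep 1) * τ)
            (algebraMap F K (p.rep 2) + algebraMap F K (p.rep 3) * τ) = 0 ∨
          Lf tQ (algebraMap F K (p.rep 0) + algebraMap F K (p.rep 1) * τ)
            (algebraMap F K (p.rep 2) + algebraMap F K (p.rep 3) * τ) = 0 := by
        rcases hex with ⟨_, h⟩ | ⟨_, h⟩
        · exact Or.inl h
        · exact Or.inr h
      have h0 := (hsplit _ _).mpr hL
      rw [← hbb h4, hdec] at h0
      obtain ⟨hA, hB⟩ := st9_indep τ hτF _ _ h0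
      exact ⟨⟨hA, hB⟩, h4⟩
  · -- the PG(4,q²) statement
    ext p
    simp only [Set.mem_inter_iff, Set.mem_setOf_eq, Set.mem_union]
    have h4iff : p ∈ sinf K ↔ p.rep 4 = 0 := Iff.rfl
    rw [h4iff]
    have hExt : ∀ t : Option K, (p ∈ extSpreadLine F c0 c1 t0 t1 t ↔
        p.rep ∈ Submodule.span K {gptVec τ q t, gqptVec τ q t}) := by
      intro t
      unfold extSpreadLine
      rw [hspan t]
      exact Iff.rfl
    have hLine : ∀ t t' : Option K, (p ∈ lineTh (gpt τ q t) (gqpt τ q t') ↔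
        p.rep ∈ Submodule.span K {gptVec τ q t, gqptVec τ q t'}) := by
      intro t t'
      rw [hline t t']
      exact Iff.rfl
    have hLine2 : lineTh (gqpt τ q tP) (gpt τ q tQ)
        = ptsOf (Submodule.span K {gptVec τ q tQ, gqptVec τ q tP}) := by
      obtain ⟨c, hc0, hcrep⟩ := st9_exists_rep_mk (gqptVec τ q tP) (gqptVec_ne τ q tP)
      obtain ⟨d, hd0, hdrep⟩ := st9_exists_rep_mk (gptVec τ q tQ) (gptVec_ne τ q tQ)
      unfold lineTh gpt gqpt
      rw [hcrep, hdrep, Set.pair_comm, st9_mem_span_pair_smul hd0 hc0]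
    have hLine2' : (p ∈ lineTh (gqpt τ q tP) (gpt τ q tQ) ↔
        p.rep ∈ Submodule.span K {gptVec τ q tQ, gqptVec τ q tP}) := by
      rw [hLine2]
      exact Iff.rfl
    rw [hExt tP, hExt tQ, hLine tP tQ, hLine2']
    have master : ∀ t t' : Option K,
        (p.rep 4 = 0 ∧ Lf t (p.rep 0 + p.rep 1 * τ) (p.rep 2 + p.rep 3 * τ) = 0 ∧
          Lfq q t' (p.rep 0 + p.rep 1 * τ^q) (p.rep 2 + p.rep 3 * τ^q) = 0)
        ↔ p.rep ∈ Submodule.span K {gptVec τ q t, gqptVec τ q t'} := by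
      intro t t'
      rw [st9_ext_master τ q hneq t t' p.rep, Submodule.mem_span_pair]
    rw [← master tP tP, ← master tQ tQ, ← master tP tQ, ← master tQ tP]
    constructor
    · rintro ⟨⟨hA, hB⟩, h4⟩
      have e1 : qeval M ![p.rep 0 + p.rep 1 * τ, p.rep 2 + p.rep 3 * τ, 0] = 0 := by
        have := hdecK p.rep
        rw [h4, hA, hB] at this
        rw [this]; ring
      have e2 : qeval (M.map φ) ![p.rep 0 + p.rep 1 * τ^q, p.rep 2 + p.rep 3 * τ^q, 0] = 0 := by
        have := hconj p.rep
        rw [h4, hA, hB] at this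
        rw [this]; ring
      have hL := (hsplit _ _).mp e1
      have hLq := (hMφ _ _).mp e2
      rcases hL with hL | hL <;> rcases hLq with hLq | hLq
      · exact Or.inl (Or.inl (Or.inl ⟨h4, hL, hLq⟩))
      · exact Or.inl (Or.inr ⟨h4, hL, hLq⟩)
      · exact Or.inr ⟨h4, hL, hLq⟩
      · exact Or.inl (Or.inl (Or.inr ⟨h4, hL, hLq⟩))
    · intro hmem
      have h4 : p.rep 4 = 0 := by
        rcases hmem with ((⟨h4, _⟩ | ⟨h4, _⟩) | ⟨h4, _⟩) | ⟨h4, _⟩ <;> exact h4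
      have hL : Lf tP (p.rep 0 + p.rep 1 * τ) (p.rep 2 + p.rep 3 * τ) = 0 ∨
          Lf tQ (p.rep 0 + p.rep 1 * τ) (p.rep 2 + p.rep 3 * τ) = 0 := by
        rcases hmem with ((⟨_, h, _⟩ | ⟨_, h, _⟩) | ⟨_, h, _⟩) | ⟨_, h, _⟩
        · exact Or.inl h
        · exact Or.inr h
        · exact Or.inl h
        · exact Or.inr h
      have hLq : Lfq q tP (p.rep 0 + p.rep 1 * τ^q) (p.rep 2 + p.rep 3 * τ^q) = 0 ∨
          Lfq q tQ (p.rep 0 + p.rep 1 * τ^q) (p.rep 2 + p.rep 3 * τ^q) = 0 := by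
        rcases hmem with ((⟨_, _, h⟩ | ⟨_, _, h⟩) | ⟨_, _, h⟩) | ⟨_, _, h⟩
        · exact Or.inl h
        · exact Or.inr h
        · exact Or.inr h
        · exact Or.inl h
      have e1 := (hsplit _ _).mpr hL
      have e2 := (hMφ _ _).mpr hLq
      have d1 := hdecK p.rep
      have d2 := hconj p.rep
      rw [h4, e1] at d1
      rw [h4, e2] at d2
      have hB : qeval (M0.map (algebraMap F K)) p.rep = 0 := by
        have h0 : qeval (M0.map (algebraMap F K)) p.rep * (τ - τ^q) = 0 := by
          linear_combination -d1 + d2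
        rcases mul_eq_zero.mp h0 with h | h
        · exact h
        · exact absurd (by linear_combination -h) (sub_ne_zero.mpr hneq)
      have hA : qeval (Minf.map (algebraMap F K)) p.rep = 0 := by
        linear_combination -d1 - τ * hB
      exact ⟨⟨hA, hB⟩, h4⟩

end BaerConics
end
end

section
/- Let f be a quadratic form over K = GF(q²) whose zero set in PG(2,q²) is an F_{q²}-conic 𝒪, and let L̄ be a point of ℓ∞ with L̄ ∉ 𝒪. Then in PG(4,q²), the extended spread line [L]⋆ is disjoint from [𝒪]⋆. -/
open scoped Classical
open Matrix

noncomputable section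

namespace BaerConics

variable {K : Type} [Field K] {m n : ℕ}

lemma qeval_smul' {K : Type} [Field K] {n : ℕ} (A : Matrix (Fin n) (Fin n) K)
    (c : K) (x : Fin n → K) : qeval A (c • x) = c ^ 2 * qeval A x := by
  simp only [qeval, Matrix.mulVec_smul, dotProduct_smul, smul_dotProduct, smul_eq_mul]
  ring

lemma qeval_expand {K : Type} [Field K] {n : ℕ} (A : Matrix (Fin n) (Fin n) K)
    (a b : K) (x y : Fin n → K) :
    qeval A (a • x + b • y) =
      a ^ 2 * qeval A x + a * b * (qeval A (x + y) - qeval A x - qeval A y)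
        + b ^ 2 * qeval A y := by
  simp only [qeval, Matrix.mulVec_add, Matrix.mulVec_smul, dotProduct_add,
    add_dotProduct, dotProduct_smul, smul_dotProduct, smul_eq_mul]
  ring

lemma algVec_add {F K : Type} [Field F] [Field K] [Algebra F K] {n : ℕ}
    (v w : Fin n → F) : algVec F (v + w) = (algVec F v : Fin n → K) + algVec F w := by
  funext i; simp [algVec, map_add]

lemma qeval_algVec {F K : Type} [Field F] [Field K] [Algebra F K] {n : ℕ}
    (A : Matrix (Fin n) (Fin n) F) (v : Fin n → F) :
    qeval (A.map (algebraMap F K)) (algVec F v) = algebraMap F K (qeval A v) := by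
  simp [qeval, dotProduct, Matrix.mulVec, algVec, Finset.mul_sum, map_sum, _root_.map_mul]

lemma indep {F K : Type} [Field F] [Field K] [Algebra F K] {τ : K}
    (hτF : τ ∉ Set.range (algebraMap F K)) {a b : F}
    (h : algebraMap F K a + algebraMap F K b * τ = 0) : a = 0 ∧ b = 0 := by
  have hb : b = 0 := by
    by_contra hb
    apply hτF
    refine ⟨-a / b, ?_⟩
    have hbK : algebraMap F K b ≠ 0 := fun h0 =>
      hb ((algebraMap F K).injective (by rw [h0, map_zero]))
    rw [map_div₀, map_neg]
    field_simp
    linear_combination -h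
  refine ⟨?_, hb⟩
  have h0 : algebraMap F K a = 0 := by rw [hb] at h; simpa using h
  exact (algebraMap F K).injective (by rw [h0, map_zero])

lemma disc_ne {F K : Type} [Field F] [Field K] [Fintype F] [Algebra F K] {τ : K} {t0 t1 : F}
    (hτ : τ ^ 2 = algebraMap F K t1 * τ + algebraMap F K t0)
    (hτF : τ ∉ Set.range (algebraMap F K)) : t1 ^ 2 + 4 * t0 ≠ 0 := by
  intro hd
  by_cases h2F : (2 : F) = 0
  · -- characteristic 2
    have ht1 : t1 = 0 := by
      have h : t1 ^ 2 = 0 := by linear_combination hd - 2 * t0 * h2F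
      exact (pow_eq_zero_iff two_ne_zero).mp h
    have hτ0 : τ ^ 2 = algebraMap F K t0 := by
      rw [ht1] at hτ; simpa using hτ
    have hinj : Function.Injective (fun x : F => x ^ 2) := by
      intro x y hxy
      simp only at hxy
      have h : (x - y) ^ 2 = 0 := by linear_combination hxy + (y ^ 2 - x * y) * h2F
      exact sub_eq_zero.mp ((pow_eq_zero_iff two_ne_zero).mp h)
    obtain ⟨x, hx⟩ := Finite.injective_iff_surjective.mp hinj t0
    simp only at hx
    have h2K : (2 : K) = 0 := by
      rw [← map_ofNat (algebraMap F K) 2, h2F, map_zero]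
    have hxK : (algebraMap F K x) ^ 2 = algebraMap F K t0 := by rw [← map_pow, hx]
    have hsq0 : (τ - algebraMap F K x) ^ 2 = 0 := by
      linear_combination hτ0 + hxK + (algebraMap F K t0 - τ * algebraMap F K x) * h2K
    exact hτF ⟨x, (sub_eq_zero.mp ((pow_eq_zero_iff two_ne_zero).mp hsq0)).symm⟩
  · have h4 : (algebraMap F K t1) ^ 2 + 4 * algebraMap F K t0 = 0 := by
      have := congrArg (algebraMap F K) hd
      simpa only [map_add, _root_.map_mul, map_pow, map_ofNat, map_zero] using this
    have hsq : (2 * τ - algebraMap F K t1) ^ 2 = 0 := by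
      linear_combination 4 * hτ + h4
    have h2 : 2 * τ - algebraMap F K t1 = 0 := (pow_eq_zero_iff two_ne_zero).mp hsq
    have h2K : (2 : K) ≠ 0 := by
      intro h
      apply h2F
      apply (algebraMap F K).injective
      rw [map_ofNat, map_zero, h]
    apply hτF
    refine ⟨t1 / 2, ?_⟩
    rw [map_div₀, map_ofNat, div_eq_iff h2K]
    linear_combination -h2

lemma bbSubst_add {F K : Type} [Field F] [Field K] [Algebra F K] (τ : K)
    (v w : Fin 5 → F) : bbSubst F τ (v + w) = bbSubst F τ v + bbSubst F τ w := by
  funext i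
  fin_cases i <;> simp [bbSubst, map_add] <;> ring

/-- If `L̄ ∈ ℓ∞` does not lie on a nondegenerate conic `𝒪`, then in `PG(4,q²)` the
extended spread line `[L]⋆` is disjoint from `[𝒪]⋆`. -/
theorem statement_11
    {F K : Type} [Field F] [Field K] [Fintype F] [Fintype K] [Algebra F K]
    (q : ℕ) (hq : Fintype.card F = q) (hK : Fintype.card K = q ^ 2)
    (τ : K) (t0 t1 : F)
    (hτ : τ ^ 2 = algebraMap F K t1 * τ + algebraMap F K t0)
    (hτF : τ ∉ Set.range (algebraMap F K))
    (c0 c1 : K → F)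
    (hc : ∀ x : K, x = algebraMap F K (c0 x) + algebraMap F K (c1 x) * τ)
    (M : Matrix (Fin 3) (Fin 3) K)
    (hO : IsFq2Conic {p : PP K 3 | qeval M p.rep = 0})
    (Minf M0 : Matrix (Fin 5) (Fin 5) F)
    (hdec : ∀ v : Fin 5 → F, qeval M (bbSubst F τ v) =
      algebraMap F K (qeval Minf v) + algebraMap F K (qeval M0 v) * τ)
    (tL : Option K) (hnot : ptInf tL ∉ {p : PP K 3 | qeval M p.rep = 0}) :
    extSpreadLine F c0 c1 t0 t1 tL ∩
      {p : PP K 5 | qeval (Minf.map (algebraMap F K)) p.rep = 0 ∧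
        qeval (M0.map (algebraMap F K)) p.rep = 0} = ∅ := by
  classical
  rw [Set.eq_empty_iff_forall_notMem]
  rintro p ⟨hmem, hz1, hz2⟩
  -- the representative vector of the point at infinity
  have hQδ : qeval M (ptInfVec tL) ≠ 0 := by
    intro h0
    apply hnot
    show qeval M (ptInf tL).rep = 0
    obtain ⟨c, hcc⟩ := (Projectivization.mk_eq_mk_iff K _ _ _ _).mp
      (Projectivization.mk_rep (ptInf tL))
    rw [← hcc, Units.smul_def, qeval_smul', h0, mul_zero]
  obtain ⟨u, w, hQuv⟩ : ∃ u w : F,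
      qeval M (ptInfVec tL) = algebraMap F K u + algebraMap F K w * τ :=
    ⟨_, _, hc (qeval M (ptInfVec tL))⟩
  -- images of the spread vectors under the Bruck-Bose substitution
  have hb1 : bbSubst F τ (spreadV1 c0 c1 tL) = ptInfVec tL := by
    cases tL with
    | none => funext i; fin_cases i <;> simp [bbSubst, spreadV1, ptInfVec]
    | some δ =>
      funext i
      fin_cases i
      · show algebraMap F K (c0 δ) + algebraMap F K (c1 δ) * τ = δ
        exact (hc δ).symm
      · simp [bbSubst, spreadV1, ptInfVec]
      · simp [bbSubst, spreadV1, ptInfVec]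
  have hb2 : bbSubst F τ (spreadV2 c0 c1 t0 t1 tL) = τ • ptInfVec tL := by
    cases tL with
    | none => funext i; fin_cases i <;> simp [bbSubst, spreadV2, ptInfVec]
    | some δ =>
      funext i
      fin_cases i
      · show algebraMap F K (t0 * c1 δ) + algebraMap F K (c0 δ + t1 * c1 δ) * τ = τ * δ
        simp only [map_add, _root_.map_mul]
        linear_combination (-τ) * hc δ + (-(algebraMap F K (c1 δ))) * hτ
      · simp [bbSubst, spreadV2, ptInfVec]
      · simp [bbSubst, spreadV2, ptInfVec]
  have hb3 : bbSubst F τ (spreadV1 c0 c1 tL + spreadV2 c0 c1 t0 t1 tL)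
      = (1 + τ) • ptInfVec tL := by
    rw [bbSubst_add, hb1, hb2, add_smul, one_smul]
  -- the three decomposition identities
  have hd1 : qeval M (ptInfVec tL) =
      algebraMap F K (qeval Minf (spreadV1 c0 c1 tL)) +
        algebraMap F K (qeval M0 (spreadV1 c0 c1 tL)) * τ := by
    have h := hdec (spreadV1 c0 c1 tL); rwa [hb1] at h
  have hd2 : τ ^ 2 * qeval M (ptInfVec tL) =
      algebraMap F K (qeval Minf (spreadV2 c0 c1 t0 t1 tL)) +
        algebraMap F K (qeval M0 (spreadV2 c0 c1 t0 t1 tL)) * τ := by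
    have h := hdec (spreadV2 c0 c1 t0 t1 tL); rwa [hb2, qeval_smul'] at h
  have hd3 : (1 + τ) ^ 2 * qeval M (ptInfVec tL) =
      algebraMap F K (qeval Minf (spreadV1 c0 c1 tL + spreadV2 c0 c1 t0 t1 tL)) +
        algebraMap F K (qeval M0 (spreadV1 c0 c1 tL + spreadV2 c0 c1 t0 t1 tL)) * τ := by
    have h := hdec (spreadV1 c0 c1 tL + spreadV2 c0 c1 t0 t1 tL)
    rwa [hb3, qeval_smul'] at h
  -- the point lies on the extended spread line
  have hmem' : p.rep ∈ Submodule.span K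
      {algVec F (spreadV1 c0 c1 tL), algVec F (spreadV2 c0 c1 t0 t1 tL)} := hmem
  obtain ⟨a, b, hp⟩ := Submodule.mem_span_pair.mp hmem'
  rw [← hp, qeval_expand, ← algVec_add, qeval_algVec, qeval_algVec, qeval_algVec] at hz1
  rw [← hp, qeval_expand, ← algVec_add, qeval_algVec, qeval_algVec, qeval_algVec] at hz2
  -- first consequence : a + bτ = 0
  have key : (a + b * τ) ^ 2 * qeval M (ptInfVec tL) = 0 := by
    linear_combination hz1 + τ * hz2 + a ^ 2 * hd1 + a * b * (hd3 - hd1 - hd2)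
      + b ^ 2 * hd2
  have habτ : a + b * τ = 0 := by
    rcases mul_eq_zero.mp key with h | h
    · exact (pow_eq_zero_iff two_ne_zero).mp h
    · exact absurd h hQδ
  have hb0 : b ≠ 0 := by
    intro h0
    have ha0 : a = 0 := by simpa [h0] using habτ
    apply p.rep_nonzero
    rw [← hp, ha0, h0]
    simp
  have hab : a = -(b * τ) := by linear_combination habτ
  -- extraction of the F-level quadratic values
  have e1 : algebraMap F K (qeval Minf (spreadV1 c0 c1 tL) - u) +
      algebraMap F K (qeval M0 (spreadV1 c0 c1 tL) - w) * τ = 0 := by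
    simp only [map_sub]
    linear_combination hQuv - hd1
  have e2 : algebraMap F K (qeval Minf (spreadV2 c0 c1 t0 t1 tL) - (t0 * u + t0 * (t1 * w))) +
      algebraMap F K (qeval M0 (spreadV2 c0 c1 t0 t1 tL)
        - (t1 * u + t0 * w + t1 ^ 2 * w)) * τ = 0 := by
    simp only [map_sub, map_add, _root_.map_mul, map_pow]
    linear_combination -hd2 + τ ^ 2 * hQuv +
      (algebraMap F K u + algebraMap F K w * τ + algebraMap F K t1 * algebraMap F K w) * hτ
  have e3 : algebraMap F K (qeval Minf (spreadV1 c0 c1 tL + spreadV2 c0 c1 t0 t1 tL)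
        - (u + 2 * (t0 * w) + t0 * u + t0 * (t1 * w))) +
      algebraMap F K (qeval M0 (spreadV1 c0 c1 tL + spreadV2 c0 c1 t0 t1 tL)
        - (2 * u + w + 2 * (t1 * w) + t1 * u + t0 * w + t1 ^ 2 * w)) * τ = 0 := by
    simp only [map_sub, map_add, _root_.map_mul, map_pow, map_ofNat]
    linear_combination -hd3 + (1 + τ) ^ 2 * hQuv +
      (algebraMap F K u + 2 * algebraMap F K w + algebraMap F K w * τ +
        algebraMap F K t1 * algebraMap F K w) * hτ
  have f1 : qeval Minf (spreadV1 c0 c1 tL) = u := sub_eq_zero.mp (indep hτF e1).1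
  have f2 : qeval M0 (spreadV1 c0 c1 tL) = w := sub_eq_zero.mp (indep hτF e1).2
  have f3 : qeval Minf (spreadV2 c0 c1 t0 t1 tL) = t0 * u + t0 * (t1 * w) :=
    sub_eq_zero.mp (indep hτF e2).1
  have f4 : qeval M0 (spreadV2 c0 c1 t0 t1 tL) = t1 * u + t0 * w + t1 ^ 2 * w :=
    sub_eq_zero.mp (indep hτF e2).2
  have f5 : qeval Minf (spreadV1 c0 c1 tL + spreadV2 c0 c1 t0 t1 tL)
      = u + 2 * (t0 * w) + t0 * u + t0 * (t1 * w) := sub_eq_zero.mp (indep hτF e3).1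
  have f6 : qeval M0 (spreadV1 c0 c1 tL + spreadV2 c0 c1 t0 t1 tL)
      = 2 * u + w + 2 * (t1 * w) + t1 * u + t0 * w + t1 ^ 2 * w :=
    sub_eq_zero.mp (indep hτF e3).2
  rw [f1, f3, f5, hab] at hz1
  rw [f2, f4, f6, hab] at hz2
  -- second consequences, after substituting a = -bτ
  have hA2 : b ^ 2 * (algebraMap F K (2 * (t0 * u) + t0 * (t1 * w)) +
      algebraMap F K (t1 * u - 2 * (t0 * w)) * τ) = 0 := by
    simp only [map_sub, map_add, _root_.map_mul, map_ofNat] at hz1 ⊢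
    linear_combination hz1 - b ^ 2 * algebraMap F K u * hτ
  have hB2 : b ^ 2 * (algebraMap F K (t1 * u + 2 * (t0 * w) + t1 ^ 2 * w) +
      algebraMap F K (-(2 * u) - t1 * w) * τ) = 0 := by
    simp only [map_sub, map_add, map_neg, _root_.map_mul, map_pow, map_ofNat] at hz2 ⊢
    linear_combination hz2 - b ^ 2 * algebraMap F K w * hτ
  have hA : algebraMap F K (2 * (t0 * u) + t0 * (t1 * w)) +
      algebraMap F K (t1 * u - 2 * (t0 * w)) * τ = 0 := by
    rcases mul_eq_zero.mp hA2 with h | h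
    · exact absurd ((pow_eq_zero_iff two_ne_zero).mp h) hb0
    · exact h
  have hB : algebraMap F K (t1 * u + 2 * (t0 * w) + t1 ^ 2 * w) +
      algebraMap F K (-(2 * u) - t1 * w) * τ = 0 := by
    rcases mul_eq_zero.mp hB2 with h | h
    · exact absurd ((pow_eq_zero_iff two_ne_zero).mp h) hb0
    · exact h
  obtain ⟨g1, g2⟩ := indep hτF hA
  obtain ⟨g3, g4⟩ := indep hτF hB
  have hdisc : t1 ^ 2 + 4 * t0 ≠ 0 := disc_ne hτ hτF
  have hu : u = 0 := by
    have h : u * (t1 ^ 2 + 4 * t0) = 0 := by linear_combination t1 * g2 + 2 * g1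
    exact (mul_eq_zero.mp h).resolve_right hdisc
  have hw : w = 0 := by
    have h : w * (t1 ^ 2 + 4 * t0) = 0 := by linear_combination g3 - g2
    exact (mul_eq_zero.mp h).resolve_right hdisc
  apply hQδ
  rw [hQuv, hu, hw]
  simp

end BaerConics
end
end

section
/- Let F = GF(7), K = GF(49), and f(x₀,x₁,x₂,x₃,x₄) = −x₀x₁ − x₃² + x₂x₄ + x₃x₄. Then f(1,θ,θ²,θ³,θ⁴) = 0 for all θ ∈ F and f(0,0,0,0,1) = 0, so the standard 4-dimensional normal rational curve {(1,θ,θ²,θ³,θ⁴) : θ ∈ F} ∪ {(0,0,0,0,1)} of PG(4,7) is contained in the quadric f = 0; however, for every τ ∈ K ∖ F one has f(1,τ,τ²,τ³,τ⁴) = τ⁷ − τ ≠ 0, so the extension of this curve to PG(4,49) is not contained in the extended quadric. Hence the bound q > 7 in the quadric-extension lemma for normal rational curves is tight. -/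
open scoped Classical
open Matrix

noncomputable section

namespace BaerConics

variable {K : Type} [Field K] {m n : ℕ}

/-- The quadratic form `f = −x₀x₁ − x₃² + x₂x₄ + x₃x₄`. -/
def exForm {R : Type} [CommRing R] (v : Fin 5 → R) : R :=
  -(v 0 * v 1) - v 3 ^ 2 + v 2 * v 4 + v 3 * v 4


lemma mem_range_of_pow_card {K : Type} [Field K] [Algebra (ZMod 7) K]
    (t : K) (ht : t ^ 7 = t) : t ∈ Set.range (algebraMap (ZMod 7) K) := by
  haveI : Fact (Nat.Prime 7) := ⟨by norm_num⟩
  by_contra hmem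
  set φ := algebraMap (ZMod 7) K
  have hinj : Function.Injective φ := (φ : ZMod 7 →+* K).injective
  set p : Polynomial K := Polynomial.X ^ 7 - Polynomial.X with hp
  have hpne : p ≠ 0 := by
    intro h
    have := congrArg (Polynomial.coeff · 7) h
    simp [hp, Polynomial.coeff_X] at this
  have hdeg : p.natDegree = 7 := by
    have : p.natDegree = (Polynomial.X ^ 7 : Polynomial K).natDegree := by
      apply Polynomial.natDegree_sub_eq_left_of_natDegree_lt
      simp
    simpa using this
  have hroot : ∀ s : K, s ^ 7 = s → s ∈ p.roots.toFinset := by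
    intro s hs
    simp [hp, Polynomial.mem_roots, hpne, Polynomial.IsRoot, sub_eq_zero, hs]
    exact fun h => hpne (by rw [hp, h, sub_self])
  set S : Finset K := Finset.univ.image φ with hS
  have hScard : S.card = 7 := by
    rw [hS, Finset.card_image_of_injective _ hinj]
    simp
  have hsub : insert t S ⊆ p.roots.toFinset := by
    intro x hx
    rcases Finset.mem_insert.mp hx with h | h
    · exact h ▸ hroot t ht
    · rcases Finset.mem_image.mp h with ⟨a, _, rfl⟩
      apply hroot
      rw [← map_pow, ZMod.pow_card]
  have htS : t ∉ S := by
    intro h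
    rcases Finset.mem_image.mp h with ⟨a, _, rfl⟩
    exact hmem ⟨a, rfl⟩
  have h8 : 8 ≤ p.roots.toFinset.card := by
    have := Finset.card_le_card hsub
    rwa [Finset.card_insert_of_notMem htS, hScard] at this
  have h7 : p.roots.toFinset.card ≤ 7 := by
    calc p.roots.toFinset.card ≤ Multiset.card p.roots := p.roots.toFinset_card_le
    _ ≤ p.natDegree := p.card_roots'
    _ = 7 := hdeg
  omega

/-- Over `GF(7)` the quadric `exForm = 0` contains the standard normal rational curve,
but for every `τ ∈ GF(49) \ GF(7)` the extended curve point at `τ` is not on the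
extended quadric (its value is `τ⁷ − τ ≠ 0`): the bound `q > 7` in the quadric-extension
lemma is tight. -/
theorem statement_14 {K : Type} [Field K] [Fintype K] [Algebra (ZMod 7) K]
    (hK : Fintype.card K = 49) :
    (∀ θ : ZMod 7, exForm ![1, θ, θ ^ 2, θ ^ 3, θ ^ 4] = 0) ∧
    exForm (![0, 0, 0, 0, 1] : Fin 5 → ZMod 7) = 0 ∧
    (∀ t : K, t ∉ Set.range (algebraMap (ZMod 7) K) →
      exForm ![1, t, t ^ 2, t ^ 3, t ^ 4] = t ^ 7 - t ∧ t ^ 7 - t ≠ 0) := by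
  refine ⟨?_, ?_, ?_⟩
  · intro θ
    haveI : Fact (Nat.Prime 7) := ⟨by norm_num⟩
    have h : θ ^ 7 = θ := ZMod.pow_card θ
    simp only [exForm, Matrix.cons_val_zero, Matrix.cons_val_one, Matrix.head_cons,
      Matrix.cons_val_two, Matrix.tail_cons, Matrix.cons_val_three, Matrix.cons_val_four]
    linear_combination h
  · simp [exForm]
  · intro t ht
    constructor
    · simp only [exForm, Matrix.cons_val_zero, Matrix.cons_val_one, Matrix.head_cons,
        Matrix.cons_val_two, Matrix.tail_cons, Matrix.cons_val_three, Matrix.cons_val_four]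
      ring
    · intro h
      exact ht (mem_range_of_pow_card t (by linear_combination h))


end BaerConics
end
end
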